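/- arXiv:1202.1806 — 4 statements merged into one kernel-verified Lean document; each statement's English description precedes it below -/
import Mathlib

section
/- Let Ω(t) = (2/π)(t·arcsin(t/2) + √(4 - t²)) for |t| ≤ 2. Then for every integer k and every n ≥ 1 with |k+1| ≤ 2√n and |k| < 2√n, one has |√n·(Ω((k+1)/√n) - Ω(k/√n)) - (2/π)·arcsin(k/(2√n))| ≤ 10/√(4n - k²). -/
open Real

/-- The Vershik–Kerov–Logan–Shepp limit shape of Plancherel Young diagrams. -/
noncomputable def Omega (t : ℝ) : ℝ :=
  if |t| ≤ 2 then (2 / π) * (t * Real.arcsin (t / 2) + Real.sqrt (4 - t ^ 2)) else |t|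

/-- Smooth extension of `Omega` (no `if`). -/
noncomputable def fOm (t : ℝ) : ℝ :=
  (2 / π) * (t * Real.arcsin (t / 2) + Real.sqrt (4 - t ^ 2))

/-- The derivative of `fOm` on `(-2, 2)`. -/
noncomputable def DOm (t : ℝ) : ℝ := (2 / π) * Real.arcsin (t / 2)

lemma sqrt_half_eq (c : ℝ) : Real.sqrt (1 - (c / 2) ^ 2) = Real.sqrt (4 - c ^ 2) / 2 := by
  rw [show (1 : ℝ) - (c / 2) ^ 2 = (4 - c ^ 2) * (1 / 2) ^ 2 by ring,
    Real.sqrt_mul' _ (by positivity : (0 : ℝ) ≤ (1 / 2 : ℝ) ^ 2),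
    Real.sqrt_sq (by norm_num : (0 : ℝ) ≤ (1 / 2 : ℝ))]
  ring

lemma hasDerivAt_arcsin_half {c : ℝ} (hc : |c| < 2) :
    HasDerivAt (fun x => Real.arcsin (x / 2)) (1 / Real.sqrt (4 - c ^ 2)) c := by
  obtain ⟨hc1, hc2⟩ := abs_lt.mp hc
  have hpos : 0 < 4 - c ^ 2 := by nlinarith
  have hq : 0 < Real.sqrt (4 - c ^ 2) := Real.sqrt_pos.mpr hpos
  have h1 : (c / 2 : ℝ) ≠ -1 := by intro h; nlinarith [h]
  have h2 : (c / 2 : ℝ) ≠ 1 := by intro h; nlinarith [h]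
  have hcomp := (Real.hasDerivAt_arcsin h1 h2).comp c ((hasDerivAt_id c).div_const 2)
  have : (fun x => Real.arcsin (x / 2)) = Real.arcsin ∘ (fun x => x / 2) := rfl
  rw [this]
  convert hcomp using 1  <;> try rfl
  rw [sqrt_half_eq]
  field_simp

lemma hasDerivAt_fOm {t : ℝ} (ht : |t| < 2) : HasDerivAt fOm (DOm t) t := by
  obtain ⟨h1, h2⟩ := abs_lt.mp ht
  have hpos : 0 < 4 - t ^ 2 := by nlinarith
  have hq : 0 < Real.sqrt (4 - t ^ 2) := Real.sqrt_pos.mpr hpos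
  have hA : HasDerivAt (fun x : ℝ => x * Real.arcsin (x / 2))
      (1 * Real.arcsin (t / 2) + t * (1 / Real.sqrt (4 - t ^ 2))) t :=
    (hasDerivAt_id t).mul (hasDerivAt_arcsin_half ht)
  have hinner : HasDerivAt (fun x : ℝ => 4 - x ^ 2) (-(2 * t)) t := by
    have := (hasDerivAt_pow 2 t).const_sub 4
    convert this using 1  <;> try rfl
    simp
  have hB : HasDerivAt (fun x : ℝ => Real.sqrt (4 - x ^ 2)) (-t / Real.sqrt (4 - t ^ 2)) t := by
    have hcomp := (Real.hasDerivAt_sqrt (ne_of_gt hpos)).comp t hinner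
    have : (fun x : ℝ => Real.sqrt (4 - x ^ 2)) = Real.sqrt ∘ (fun x : ℝ => 4 - x ^ 2) := rfl
    rw [this]
    convert hcomp using 1  <;> try rfl
    field_simp
  have hsum := (hA.add hB).const_mul (2 / π)
  have hfun : fOm = fun x : ℝ =>
      (2 / π) * (x * Real.arcsin (x / 2) + Real.sqrt (4 - x ^ 2)) := rfl
  rw [hfun]
  convert hsum using 1  <;> try rfl
  have hc : t * (1 / Real.sqrt (4 - t ^ 2)) + -t / Real.sqrt (4 - t ^ 2) = 0 := by
    field_simp
    ring
  unfold DOm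
  linear_combination (2 / π) * hc

lemma continuous_fOm : Continuous fOm := by
  unfold fOm
  have h1 : Continuous fun x : ℝ => Real.arcsin (x / 2) :=
    Real.continuous_arcsin.comp (continuous_id.div_const 2)
  have h2 : Continuous fun x : ℝ => Real.sqrt (4 - x ^ 2) :=
    Real.continuous_sqrt.comp (by continuity)
  exact continuous_const.mul ((continuous_id.mul h1).add h2)

lemma arcsin_half_lip {a b M : ℝ} (ha : -2 < a) (hb : b < 2) (hab : a ≤ b) (hM0 : 0 ≤ M)
    (hM : ∀ c ∈ Set.Icc a b, 1 / Real.sqrt (4 - c ^ 2) ≤ M) :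
    ∀ t ∈ Set.Icc a b, |Real.arcsin (t / 2) - Real.arcsin (a / 2)| ≤ M * (b - a) := by
  intro t ht
  have hg : ∀ c ∈ Set.Icc a b, HasDerivWithinAt (fun x => Real.arcsin (x / 2))
      (1 / Real.sqrt (4 - c ^ 2)) (Set.Icc a b) c := by
    intro c hc
    exact (hasDerivAt_arcsin_half
      (abs_lt.mpr ⟨lt_of_lt_of_le ha hc.1, lt_of_le_of_lt hc.2 hb⟩)).hasDerivWithinAt
  have hm := (convex_Icc a b).norm_image_sub_le_of_norm_hasDerivWithin_le hg
    (fun c hc => by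
      rw [Real.norm_eq_abs, abs_of_nonneg (by positivity)]; exact hM c hc)
    (Set.left_mem_Icc.mpr hab) ht
  rw [Real.norm_eq_abs, Real.norm_eq_abs, abs_of_nonneg (by linarith [ht.1] : (0:ℝ) ≤ t - a)]
    at hm
  refine hm.trans ?_
  nlinarith [ht.2]

lemma key_lt {a b C : ℝ} (ha : -2 < a) (hb : b < 2) (hab : a ≤ b) (hC : 0 ≤ C)
    (hbound : ∀ t ∈ Set.Icc a b, |DOm t - DOm a| ≤ C) :
    |fOm b - fOm a - (b - a) * DOm a| ≤ C * (b - a) := by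
  have hg : ∀ t ∈ Set.Icc a b, HasDerivWithinAt (fun x => fOm x - x * DOm a)
      ((fun t => DOm t - DOm a) t) (Set.Icc a b) t := by
    intro t ht
    have habs : |t| < 2 := abs_lt.mpr ⟨lt_of_lt_of_le ha ht.1, lt_of_le_of_lt ht.2 hb⟩
    have := (hasDerivAt_fOm habs).sub ((hasDerivAt_id t).mul_const (DOm a))
    exact this.hasDerivWithinAt.congr_deriv (by simp)
  have hm := (convex_Icc a b).norm_image_sub_le_of_norm_hasDerivWithin_le hg
    (fun t ht => by rw [Real.norm_eq_abs]; exact hbound t ht)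
    (Set.left_mem_Icc.mpr hab) (Set.right_mem_Icc.mpr hab)
  rw [Real.norm_eq_abs, Real.norm_eq_abs, abs_of_nonneg (by linarith : (0:ℝ) ≤ b - a)] at hm
  calc |fOm b - fOm a - (b - a) * DOm a|
      = |fOm b - b * DOm a - (fOm a - a * DOm a)| := by congr 1; ring
    _ ≤ C * (b - a) := hm

lemma key {a b C : ℝ} (ha : -2 < a) (hb : b ≤ 2) (hab : a ≤ b) (hC : 0 ≤ C)
    (hbound : ∀ t ∈ Set.Icc a b, |DOm t - DOm a| ≤ C) :
    |fOm b - fOm a - (b - a) * DOm a| ≤ C * (b - a) := by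
  rcases lt_or_eq_of_le hb with hb' | rfl
  · exact key_lt ha hb' hab hC hbound
  rcases eq_or_lt_of_le hab with rfl | hab'
  · simp
  have hφ : Continuous fun x => |fOm x - fOm a - (x - a) * DOm a| :=
    ((continuous_fOm.sub continuous_const).sub
      ((continuous_id.sub continuous_const).mul continuous_const)).abs
  have hT : Filter.Tendsto (fun x => |fOm x - fOm a - (x - a) * DOm a|)
      (nhdsWithin 2 (Set.Iio 2)) (nhds (|fOm 2 - fOm a - (2 - a) * DOm a|)) :=
    (hφ.tendsto 2).mono_left nhdsWithin_le_nhds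
  refine le_of_tendsto hT ?_
  filter_upwards [Ioo_mem_nhdsLT hab']
    with x hx
  have h1 := key_lt ha hx.2 hx.1.le hC
    (fun t ht => hbound t ⟨ht.1, ht.2.trans hx.2.le⟩)
  refine h1.trans ?_
  nlinarith [hx.2]

set_option maxHeartbeats 1000000 in
theorem omega_increment_estimate (k : ℤ) (n : ℕ) (hn : 1 ≤ n)
    (h1 : |(k : ℝ) + 1| ≤ 2 * Real.sqrt n) (h2 : |(k : ℝ)| < 2 * Real.sqrt n) :
    |Real.sqrt n * (Omega (((k : ℝ) + 1) / Real.sqrt n) - Omega ((k : ℝ) / Real.sqrt n)) -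
        (2 / π) * Real.arcsin ((k : ℝ) / (2 * Real.sqrt n))| ≤
      10 / Real.sqrt (4 * n - (k : ℝ) ^ 2) := by
  have hn1 : (1 : ℝ) ≤ (n : ℝ) := by exact_mod_cast hn
  set s := Real.sqrt n with hs_def
  have hs1 : 1 ≤ s := by
    rw [show (1:ℝ) = Real.sqrt 1 by simp [hs_def]]
    exact Real.sqrt_le_sqrt hn1
  have hs : 0 < s := lt_of_lt_of_le one_pos hs1
  have hss : s * s = (n : ℝ) := Real.mul_self_sqrt (by positivity)
  set a := (k : ℝ) / s with ha_def
  set b := ((k : ℝ) + 1) / s with hb_def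
  have hba : b - a = 1 / s := by rw [ha_def, hb_def]; field_simp; ring
  have hab : a ≤ b := by nlinarith [one_div_pos.mpr hs]
  have hb2 : |b| ≤ 2 := by
    rw [hb_def, abs_div, abs_of_pos hs, div_le_iff₀ hs]; linarith [h1]
  have ha2 : |a| < 2 := by
    rw [ha_def, abs_div, abs_of_pos hs, div_lt_iff₀ hs]; linarith [h2]
  obtain ⟨haL, haR⟩ := abs_lt.mp ha2
  have hbR : b ≤ 2 := (abs_le.mp hb2).2
  have hqpos : 0 < 4 - a ^ 2 := by nlinarith
  set q := Real.sqrt (4 - a ^ 2) with hq_def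
  have hq : 0 < q := Real.sqrt_pos.mpr hqpos
  have hqq : q * q = 4 - a ^ 2 := Real.mul_self_sqrt hqpos.le
  have hpi := Real.pi_gt_three
  have hks : a * s = (k : ℝ) := by rw [ha_def]; field_simp
  have harg : (k : ℝ) / (2 * s) = a / 2 := by rw [ha_def]; ring
  clear_value s a b q
  have hOb : Omega b = fOm b := by simp only [Omega, fOm]; rw [if_pos hb2]
  have hOa : Omega a = fOm a := by simp only [Omega, fOm]; rw [if_pos ha2.le]
  have h4 : 4 * (n : ℝ) - (k : ℝ) ^ 2 = (s * q) ^ 2 := by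
    linear_combination (-4 : ℝ) * hss + (-(s * s)) * hqq + (a * s + (k : ℝ)) * hks
  have hrhs : Real.sqrt (4 * (n : ℝ) - (k : ℝ) ^ 2) = s * q := by
    rw [h4]; exact Real.sqrt_sq (by positivity)
  rw [hOb, hOa, harg, hrhs]
  have hkey0 : s * (fOm b - fOm a) - (2 / π) * Real.arcsin (a / 2)
      = s * (fOm b - fOm a - (b - a) * DOm a) := by
    rw [hba]
    unfold DOm
    field_simp
  rw [hkey0, abs_mul, abs_of_pos hs]
  rcases le_or_gt b (2 - 1 / s) with hcase | hcase
  · -- interior case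
    have hb2' : b < 2 := by
      have : 0 < 1 / s := one_div_pos.mpr hs
      linarith
    have hMbound : ∀ c ∈ Set.Icc a b, 1 / Real.sqrt (4 - c ^ 2) ≤ 2 / q := by
      intro c hc
      have h2c : (2 - a) / 2 ≤ 2 - c := by
        have h2b : 1 / s ≤ 2 - b := by linarith
        linarith [hc.2, hba]
      have hcp : (0:ℝ) ≤ 2 + c := by linarith [hc.1]
      have hlow : (4 - a ^ 2) / 4 ≤ 4 - c ^ 2 := by
        nlinarith [mul_nonneg (by linarith : (0:ℝ) ≤ 2 - c - (2 - a) / 2) hcp,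
          mul_nonneg (by linarith : (0:ℝ) ≤ (2 - a) / 2) (by linarith [hc.1] : (0:ℝ) ≤ c - a)]
      have hsq : q / 2 ≤ Real.sqrt (4 - c ^ 2) := by
        have := Real.sqrt_le_sqrt hlow
        rw [show (4 - a ^ 2) / 4 = (4 - a ^ 2) * (1 / 2) ^ 2 by ring,
          Real.sqrt_mul' _ (by positivity : (0:ℝ) ≤ (1/2:ℝ) ^ 2),
          Real.sqrt_sq (by norm_num : (0:ℝ) ≤ (1/2:ℝ)), ← hq_def] at this
        calc q / 2 = q * (1 / 2) := by ring
          _ ≤ _ := this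
      calc 1 / Real.sqrt (4 - c ^ 2) ≤ 1 / (q / 2) :=
            one_div_le_one_div_of_le (by linarith) hsq
        _ = 2 / q := by rw [one_div_div]
    have harc := arcsin_half_lip haL hb2' hab (le_of_lt (div_pos two_pos hq)) hMbound
    have hbound : ∀ t ∈ Set.Icc a b, |DOm t - DOm a| ≤ (2 / π) * (2 / q * (b - a)) := by
      intro t ht
      have := harc t ht
      unfold DOm
      rw [← mul_sub, abs_mul, abs_of_pos (by positivity : (0:ℝ) < 2 / π)]
      exact mul_le_mul_of_nonneg_left this (by positivity)
    have hX := key haL hbR hab (by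
      rw [hba]
      exact le_of_lt (mul_pos (by positivity) (mul_pos (div_pos two_pos hq)
        (one_div_pos.mpr hs)))) hbound
    calc s * |fOm b - fOm a - (b - a) * DOm a|
        ≤ s * ((2 / π) * (2 / q * (b - a)) * (b - a)) :=
          mul_le_mul_of_nonneg_left hX hs.le
      _ ≤ 10 / (s * q) := by
          rw [hba]
          rw [show s * (2 / π * (2 / q * (1 / s)) * (1 / s)) = 4 / (π * (s * q)) by
            field_simp; ring]
          rw [div_le_div_iff₀ (by positivity) (by positivity)]
          nlinarith [mul_pos hs hq]
  · -- boundary case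
    have h1s : 1 / s ≤ 1 := by rw [div_le_one hs]; exact hs1
    have ha0 : 0 ≤ a := by
      have : a = b - 1 / s := by linarith [hba]
      linarith
    have hbound : ∀ t ∈ Set.Icc a b, |DOm t - DOm a| ≤ q / 2 := by
      intro t ht
      have hmono : Real.arcsin (a / 2) ≤ Real.arcsin (t / 2) :=
        Real.monotone_arcsin (by linarith [ht.1])
      have htop : Real.arcsin (t / 2) ≤ π / 2 := Real.arcsin_le_pi_div_two _
      have h0 : 0 ≤ Real.arcsin (a / 2) := Real.arcsin_nonneg.mpr (by linarith)
      have hx0 : 0 ≤ π / 2 - Real.arcsin (a / 2) := by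
        linarith [Real.arcsin_le_pi_div_two (a / 2)]
      have hxπ : π / 2 - Real.arcsin (a / 2) ≤ π / 2 := by linarith
      have hj := Real.mul_le_sin hx0 hxπ
      rw [Real.sin_pi_div_two_sub, Real.cos_arcsin, sqrt_half_eq, ← hq_def] at hj
      unfold DOm
      rw [← mul_sub, abs_mul, abs_of_pos (by positivity : (0:ℝ) < 2 / π),
        abs_of_nonneg (by linarith)]
      calc 2 / π * (Real.arcsin (t / 2) - Real.arcsin (a / 2))
          ≤ 2 / π * (π / 2 - Real.arcsin (a / 2)) :=
            mul_le_mul_of_nonneg_left (by linarith) (by positivity)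
        _ ≤ q / 2 := hj
    have hX := key haL hbR hab (by linarith) hbound
    have h2a : 2 - a ≤ 2 / s := by
      have hdup : 2 / s = 1 / s + 1 / s := by ring
      have : a = b - 1 / s := by linarith [hba]
      have h2b : 2 - b < 1 / s := by linarith
      linarith
    calc s * |fOm b - fOm a - (b - a) * DOm a|
        ≤ s * (q / 2 * (b - a)) := mul_le_mul_of_nonneg_left hX hs.le
      _ = q / 2 := by rw [hba]; field_simp; try ring
      _ ≤ 10 / (s * q) := by
          rw [div_le_div_iff₀ (by norm_num) (by positivity)]
          have hqs : q * q * s ≤ 8 := by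
            have h1 : q * q ≤ (2 / s) * (2 + a) := by
              rw [hqq]
              nlinarith
            have h2 : (2 / s) * (2 + a) * s = 2 * (2 + a) := by field_simp; try ring
            nlinarith [mul_le_mul_of_nonneg_right h1 hs.le]
          nlinarith
end

section
/- With S(z,u) = z - 1/z - u·log z, u = 2cos φ, φ ∈ (0,π), A ∈ ℂ nonzero, and z(t) = e^{iφ} + A·t, the third derivative of t ↦ S(z(t), u) at t = 0 equals 2A³·e^{-4iφ}·(3 - u·e^{iφ}). -/
open Complex

/-- Phase function in Okounkov's contour integral representation of the Bessel kernel. -/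
noncomputable def S (z : ℂ) (u : ℝ) : ℂ := z - 1 / z - (u : ℂ) * Complex.log z

theorem third_derivative_at_critical_point (φ : ℝ) (hφ : φ ∈ Set.Ioo 0 Real.pi)
    (A : ℂ) (hA : A ≠ 0) :
    iteratedDeriv 3 (fun t : ℂ => S (Complex.exp (I * φ) + A * t) (2 * Real.cos φ)) 0 =
      2 * A ^ 3 * Complex.exp (-4 * I * φ) * (3 - (2 * Real.cos φ : ℝ) * Complex.exp (I * φ)) := by
  set u : ℝ := 2 * Real.cos φ with hu
  set c : ℂ := Complex.exp (I * φ) with hc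
  set f : ℂ → ℂ := fun t : ℂ => S (c + A * t) u with hf
  set f1 : ℂ → ℂ := fun t => A * (1 + ((c + A * t)⁻¹) ^ 2 - (u : ℂ) * (c + A * t)⁻¹) with hf1
  set f2 : ℂ → ℂ := fun t =>
    A ^ 2 * (-2 * ((c + A * t)⁻¹) ^ 3 + (u : ℂ) * ((c + A * t)⁻¹) ^ 2) with hf2
  set f3 : ℂ → ℂ := fun t =>
    A ^ 3 * (6 * ((c + A * t)⁻¹) ^ 4 - 2 * (u : ℂ) * ((c + A * t)⁻¹) ^ 3) with hf3
  set U : Set ℂ := (fun t => c + A * t) ⁻¹' Complex.slitPlane with hUdef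
  have hcont : Continuous fun t : ℂ => c + A * t := by continuity
  have hU : IsOpen U := Complex.isOpen_slitPlane.preimage hcont
  have h0U : (0 : ℂ) ∈ U := by
    simp only [hUdef, Set.mem_preimage, mul_zero, add_zero]
    right
    rw [hc, mul_comm I (φ : ℂ)]
    rw [Complex.exp_ofReal_mul_I_im]
    exact (Real.sin_pos_of_pos_of_lt_pi hφ.1 hφ.2).ne'
  have hzline : ∀ t : ℂ, HasDerivAt (fun s : ℂ => c + A * s) A t := by
    intro t
    simpa using ((hasDerivAt_id t).const_mul A).const_add c
  have hne : ∀ t ∈ U, c + A * t ≠ 0 := fun t ht => Complex.slitPlane_ne_zero ht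
  -- f' = f1 on U
  have hDf : ∀ t ∈ U, HasDerivAt f (f1 t) t := by
    intro t ht
    have hz := hne t ht
    have hlog : HasDerivAt (fun z : ℂ => z - 1 / z - (u : ℂ) * Complex.log z)
        (1 + ((c + A * t)⁻¹) ^ 2 - (u : ℂ) * (c + A * t)⁻¹) (c + A * t) := by
      have h1 : HasDerivAt (fun z : ℂ => z) 1 (c + A * t) := hasDerivAt_id _
      have h2 : HasDerivAt (fun z : ℂ => 1 / z) (-(((c + A * t)) ^ 2)⁻¹) (c + A * t) := by
        simpa [one_div] using hasDerivAt_inv hz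
      have h3 : HasDerivAt (fun z : ℂ => (u : ℂ) * Complex.log z)
          ((u : ℂ) * (c + A * t)⁻¹) (c + A * t) :=
        (Complex.hasDerivAt_log ht).const_mul _
      have := (h1.sub h2).sub h3
      convert this using 1
      all_goals first | rfl | (simp only [inv_pow]; ring)
    have := hlog.comp t (hzline t)
    simpa [f, S, f1, mul_comm, Function.comp_def] using this
  have hDf1 : ∀ t ∈ U, HasDerivAt f1 (f2 t) t := by
    intro t ht
    have hz := hne t ht
    have hinv : HasDerivAt (fun s : ℂ => (c + A * s)⁻¹)
        (-((c + A * t) ^ 2)⁻¹ * A) t := (hasDerivAt_inv hz).comp t (hzline t)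
    have h := (((hinv.pow 2).add_const (1 : ℂ)).sub (hinv.const_mul (u : ℂ))).const_mul A
    have hfun : f1 = fun y : ℂ =>
        A * ((c + A * y)⁻¹ ^ 2 + 1 - (u : ℂ) * (c + A * y)⁻¹) := by
      funext s; simp only [f1]; ring
    rw [hfun]
    convert h using 1
    all_goals first | rfl | (simp only [f2, ← inv_pow, show (2:ℕ) - 1 = 1 from rfl]; ring)
  have hDf2 : ∀ t ∈ U, HasDerivAt f2 (f3 t) t := by
    intro t ht
    have hz := hne t ht
    have hinv : HasDerivAt (fun s : ℂ => (c + A * s)⁻¹)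
        (-((c + A * t) ^ 2)⁻¹ * A) t := (hasDerivAt_inv hz).comp t (hzline t)
    have h := (((hinv.pow 3).const_mul (-2 : ℂ)).add ((hinv.pow 2).const_mul (u : ℂ))).const_mul
      (A ^ 2)
    convert h using 1
    all_goals first | rfl | (simp only [f3, ← inv_pow, show (2:ℕ) - 1 = 1 from rfl, show (3:ℕ) - 1 = 2 from rfl]; ring)
  -- propagate through derivatives
  have hEq1 : Set.EqOn (deriv f) f1 U := fun t ht => (hDf t ht).deriv
  have hEq2 : Set.EqOn (deriv (deriv f)) f2 U := by
    intro t ht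
    have : deriv f =ᶠ[nhds t] f1 := Filter.eventuallyEq_of_mem (hU.mem_nhds ht) hEq1
    rw [this.deriv_eq]
    exact (hDf1 t ht).deriv
  have hEq3 : deriv (deriv (deriv f)) 0 = f3 0 := by
    have : deriv (deriv f) =ᶠ[nhds 0] f2 := Filter.eventuallyEq_of_mem (hU.mem_nhds h0U) hEq2
    rw [this.deriv_eq]
    exact (hDf2 0 h0U).deriv
  have hiter : iteratedDeriv 3 f 0 = deriv (deriv (deriv f)) 0 := by
    simp [iteratedDeriv_succ, iteratedDeriv_zero]
  rw [hiter, hEq3]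
  have hc0 : c ≠ 0 := Complex.exp_ne_zero _
  have hE4 : Complex.exp (-4 * I * φ) = (c⁻¹) ^ 4 := by
    rw [hc, ← Complex.exp_neg, ← Complex.exp_nat_mul]
    ring_nf
  simp only [f3, mul_zero, add_zero, hE4]
  field_simp
  ring
end

section
/- For integers y < 2√n - n^{1/6} and i with i < y, the sum over integers j from y+1 to ⌊2√n - n^{1/6}⌋ of (1/(j-i)²)·(√(2√n - i)/√(2√n - j) + √(2√n - j)/√(2√n - i)) is bounded by C/(y - i + 1) for an absolute constant C > 0. -/
open Real

lemma key_ineq (u k : ℝ) (hu : 1 ≤ u) (hk : 2 ≤ k) :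
    Real.sqrt k / (k ^ 2 * Real.sqrt u)
      ≤ 3 / (u + k) * (Real.sqrt (u + 1) / Real.sqrt (k - 1) - Real.sqrt u / Real.sqrt k) := by
  have hu0 : (0:ℝ) ≤ u := by linarith
  have hk0 : (0:ℝ) ≤ k := by linarith
  set a := Real.sqrt u with hadef
  set b := Real.sqrt k with hbdef
  set c := Real.sqrt (u + 1) with hcdef
  set d := Real.sqrt (k - 1) with hddef
  have ha2 : a ^ 2 = u := Real.sq_sqrt hu0
  have hb2 : b ^ 2 = k := Real.sq_sqrt hk0
  have hc2 : c ^ 2 = u + 1 := Real.sq_sqrt (by linarith)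
  have hd2 : d ^ 2 = k - 1 := Real.sq_sqrt (by linarith)
  have ha1 : 1 ≤ a := Real.le_sqrt_of_sq_le (by nlinarith)
  have hb1 : 1 ≤ b := Real.le_sqrt_of_sq_le (by nlinarith)
  have hd1 : 1 ≤ d := Real.le_sqrt_of_sq_le (by nlinarith)
  have hc0 : 0 < c := Real.sqrt_pos.2 (by linarith)
  have ha0 : (0:ℝ) < a := by linarith
  have hb0 : (0:ℝ) < b := by linarith
  have hd0 : (0:ℝ) < d := by linarith
  have hb2' : 2 ≤ b ^ 2 := by rw [hb2]; exact hk
  have hu1 : 1 ≤ a ^ 2 := by rw [ha2]; exact hu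
  -- main squared inequality
  have hmain : ((a^2 + b^2 + 3*a^2*b^2) * d)^2 ≤ (c * (3*a*b^3))^2 := by
    have e1 : ((a^2 + b^2 + 3*a^2*b^2) * d)^2 = (a^2 + b^2 + 3*a^2*b^2)^2 * (k - 1) := by
      rw [mul_pow, hd2]
    have e2 : (c * (3*a*b^3))^2 = (u + 1) * (9 * a^2 * (b^2)^3) := by
      rw [mul_pow, hc2]; ring
    rw [e1, e2, ← ha2, ← hb2]
    nlinarith [sq_nonneg a, sq_nonneg b, sq_nonneg (a*b), mul_pos ha0 hb0,
      mul_nonneg (mul_nonneg (sq_nonneg a) (sq_nonneg b)) (sq_nonneg b),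
      mul_le_mul_of_nonneg_left hu1 (by positivity : (0:ℝ) ≤ (b^2)^3),
      mul_le_mul_of_nonneg_left hb2' (by positivity : (0:ℝ) ≤ a^2*(b^2)^2)]
  have hstep : (a^2 + b^2 + 3*a^2*b^2) * d ≤ c * (3*a*b^3) := by
    have h1 : 0 ≤ (a^2 + b^2 + 3*a^2*b^2) * d := by positivity
    have := Real.sqrt_le_sqrt hmain
    rwa [Real.sqrt_sq h1, Real.sqrt_sq (by positivity)] at this
  have hcd : (a^2 + b^2) / (3*a*b^3) + a / b ≤ c / d := by
    rw [div_add_div _ _ (by positivity) (by positivity), div_le_div_iff₀ (by positivity) hd0]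
    nlinarith [mul_le_mul_of_nonneg_left hstep (le_of_lt hb0)]
  have hfin : b / ((b^2)^2 * a) ≤ 3 / (a^2 + b^2) * (c / d - a / b) := by
    have h5 : (a^2 + b^2) / (3*a*b^3) ≤ c / d - a / b := by linarith
    calc b / ((b^2)^2 * a) = 3 / (a^2 + b^2) * ((a^2 + b^2) / (3*a*b^3)) := by
          field_simp
      _ ≤ 3 / (a^2 + b^2) * (c / d - a / b) := by
          apply mul_le_mul_of_nonneg_left h5 (by positivity)
  rw [← ha2, ← hb2]
  exact hfin

lemma telescope_int (G : ℤ → ℝ) (a : ℤ) :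
    ∀ b, a ≤ b → ∑ j ∈ Finset.Icc (a + 1) b, (G (j - 1) - G j) = G a - G b := by
  refine Int.le_induction ?_ ?_
  · rw [Finset.Icc_eq_empty (by omega)]; simp
  · intro b hb ih
    have hins : Finset.Icc (a + 1) (b + 1) = insert (b + 1) (Finset.Icc (a + 1) b) := by
      ext x; simp only [Finset.mem_Icc, Finset.mem_insert]; omega
    rw [hins, Finset.sum_insert (by simp only [Finset.mem_Icc]; omega), ih]
    simp only [add_sub_cancel_right]
    ring

lemma term_bound (B' : ℝ) (i j : ℤ) (h2 : (i:ℝ) + 2 ≤ (j:ℝ)) (hBi : 0 < B' - i)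
    (huj : 1 ≤ B' - (j:ℝ) ∨ B' - (j:ℝ) = 0) :
    (1 / ((j : ℝ) - i) ^ 2) *
        (Real.sqrt (B' - i) / Real.sqrt (B' - j) + Real.sqrt (B' - j) / Real.sqrt (B' - i))
      ≤ (2 / (((j:ℝ) - 1) - i) + (3 / (B' - i)) * (Real.sqrt (B' - ((j:ℝ) - 1)) / Real.sqrt (((j:ℝ) - 1) - i)))
        - (2 / ((j:ℝ) - i) + (3 / (B' - i)) * (Real.sqrt (B' - j) / Real.sqrt ((j:ℝ) - i))) := by
  set k : ℝ := (j:ℝ) - i with hkdef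
  set u : ℝ := B' - (j:ℝ) with hudef
  have hk2 : 2 ≤ k := by linarith
  have huk : u + k = B' - i := by ring
  have hBj1 : B' - ((j:ℝ) - 1) = u + 1 := by ring
  have hki1 : ((j:ℝ) - 1) - i = k - 1 := by ring
  rw [hBj1, hki1]
  rcases huj with hu1 | hu0
  · -- main case
    have hu0 : (0:ℝ) < u := by linarith
    have hsu : (0:ℝ) < Real.sqrt u := Real.sqrt_pos.2 hu0
    have hsk : (0:ℝ) < Real.sqrt k := Real.sqrt_pos.2 (by linarith)
    have hsuk : (0:ℝ) < Real.sqrt (u + k) := Real.sqrt_pos.2 (by linarith)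
    have hadd : Real.sqrt (u + k) ≤ Real.sqrt u + Real.sqrt k := by
      have h := Real.sqrt_le_sqrt (show u + k ≤ (Real.sqrt u + Real.sqrt k)^2 by
        nlinarith [Real.sq_sqrt hu0.le, Real.sq_sqrt (show (0:ℝ) ≤ k by linarith),
          Real.sqrt_nonneg u, Real.sqrt_nonneg k, mul_pos hsu hsk])
      rwa [Real.sqrt_sq (by positivity)] at h
    have hAB : Real.sqrt (B' - i) / Real.sqrt u ≤ 1 + Real.sqrt k / Real.sqrt u := by
      rw [← huk]
      rw [div_le_iff₀ hsu]
      calc Real.sqrt (u + k) ≤ Real.sqrt u + Real.sqrt k := hadd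
        _ = (1 + Real.sqrt k / Real.sqrt u) * Real.sqrt u := by field_simp
    have hBA : Real.sqrt u / Real.sqrt (B' - i) ≤ 1 := by
      rw [div_le_one (by rw [← huk]; exact hsuk)]
      exact Real.sqrt_le_sqrt (by linarith)
    have hkey := key_ineq u k hu1 hk2
    rw [huk] at hkey
    have h2k : 2 / k ^ 2 ≤ 2 / (k - 1) - 2 / k := by
      rw [div_sub_div _ _ (by linarith : k - 1 ≠ 0) (by linarith : k ≠ 0)]
      rw [div_le_div_iff₀ (by positivity) (by nlinarith)]
      nlinarith
    have hterm : (1 / k ^ 2) *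
        (Real.sqrt (B' - i) / Real.sqrt u + Real.sqrt u / Real.sqrt (B' - i))
        ≤ 2 / k ^ 2 + Real.sqrt k / (k ^ 2 * Real.sqrt u) := by
      have : (1 / k ^ 2) * (Real.sqrt (B' - i) / Real.sqrt u + Real.sqrt u / Real.sqrt (B' - i))
          ≤ (1 / k ^ 2) * ((1 + Real.sqrt k / Real.sqrt u) + 1) := by
        apply mul_le_mul_of_nonneg_left (by linarith) (by positivity)
      calc (1 / k ^ 2) * (Real.sqrt (B' - i) / Real.sqrt u + Real.sqrt u / Real.sqrt (B' - i))
          ≤ (1 / k ^ 2) * ((1 + Real.sqrt k / Real.sqrt u) + 1) := this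
        _ = 2 / k ^ 2 + Real.sqrt k / (k ^ 2 * Real.sqrt u) := by
            field_simp; ring
    calc (1 / k ^ 2) * (Real.sqrt (B' - i) / Real.sqrt u + Real.sqrt u / Real.sqrt (B' - i))
        ≤ 2 / k ^ 2 + Real.sqrt k / (k ^ 2 * Real.sqrt u) := hterm
      _ ≤ (2 / (k - 1) - 2 / k) +
            3 / (B' - i) * (Real.sqrt (u + 1) / Real.sqrt (k - 1) - Real.sqrt u / Real.sqrt k) := by
          linarith [hkey]
      _ = (2 / (k - 1) + (3 / (B' - i)) * (Real.sqrt (u + 1) / Real.sqrt (k - 1)))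
            - (2 / k + (3 / (B' - i)) * (Real.sqrt u / Real.sqrt k)) := by ring
  · -- degenerate case u = 0
    rw [hu0]
    simp only [Real.sqrt_zero, div_zero, zero_div, add_zero, mul_zero, zero_add]
    have h1 : 2 / k ≤ 2 / (k - 1) := by
      apply div_le_div_of_nonneg_left (by norm_num) (by linarith) (by linarith)
    have h2' : 0 ≤ (3 / (B' - i)) * (Real.sqrt (0 + 1) / Real.sqrt (k - 1)) := by positivity
    linarith

theorem bulk_sum_estimate :
    ∃ C : ℝ, 0 < C ∧ ∀ (n : ℕ) (y i : ℤ),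
      (y : ℝ) < 2 * Real.sqrt n - (n : ℝ) ^ ((1 : ℝ) / 6) → i < y →
      ∑ j ∈ Finset.Icc (y + 1) ⌊2 * Real.sqrt n - (n : ℝ) ^ ((1 : ℝ) / 6)⌋,
          (1 / ((j : ℝ) - i) ^ 2) *
            (Real.sqrt (2 * Real.sqrt n - i) / Real.sqrt (2 * Real.sqrt n - j) +
              Real.sqrt (2 * Real.sqrt n - j) / Real.sqrt (2 * Real.sqrt n - i)) ≤
        C / ((y : ℝ) - i + 1) := by
  refine ⟨10, by norm_num, ?_⟩
  intro n y i hy hiy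
  set B' : ℝ := 2 * Real.sqrt n with hB'def
  set β : ℝ := (n : ℝ) ^ ((1 : ℝ) / 6) with hβdef
  set m : ℤ := ⌊B' - β⌋ with hmdef
  have hβ0 : 0 ≤ β := Real.rpow_nonneg (Nat.cast_nonneg n) _
  have hyi : (i : ℝ) + 1 ≤ (y : ℝ) := by exact_mod_cast hiy
  have hBi : 0 < B' - (i : ℝ) := by linarith
  by_cases hm : y + 1 ≤ m
  · -- nonempty case
    set G : ℤ → ℝ := fun j =>
      2 / ((j : ℝ) - i) + (3 / (B' - i)) * (Real.sqrt (B' - j) / Real.sqrt ((j : ℝ) - i))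
      with hGdef
    have hsum : ∑ j ∈ Finset.Icc (y + 1) m,
        (1 / ((j : ℝ) - i) ^ 2) *
          (Real.sqrt (B' - i) / Real.sqrt (B' - j) + Real.sqrt (B' - j) / Real.sqrt (B' - i))
        ≤ ∑ j ∈ Finset.Icc (y + 1) m, (G (j - 1) - G j) := by
      apply Finset.sum_le_sum
      intro j hj
      rw [Finset.mem_Icc] at hj
      have hji : (i : ℝ) + 2 ≤ (j : ℝ) := by exact_mod_cast (by omega : i + 2 ≤ j)
      have hjm : (j : ℝ) ≤ B' - β := le_trans (by exact_mod_cast hj.2) (Int.floor_le _)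
      have huj : 1 ≤ B' - (j : ℝ) ∨ B' - (j : ℝ) = 0 := by
        by_cases hn : 1 ≤ (n : ℝ)
        · left
          have hβ1 : 1 ≤ β := Real.one_le_rpow hn (by norm_num)
          linarith
        · have hn0 : n = 0 := by
            by_contra h
            exact hn (by exact_mod_cast Nat.one_le_iff_ne_zero.2 h)
          have hB'0 : B' = 0 := by rw [hB'def, hn0]; simp
          have hβz : β = 0 := by
            rw [hβdef, hn0]; simp only [Nat.cast_zero]
            exact Real.zero_rpow (by norm_num)
          have hj0 : (j : ℝ) ≤ 0 := by rw [hB'0, hβz] at hjm; linarith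
          rcases eq_or_lt_of_le (show j ≤ 0 by exact_mod_cast hj0) with h | h
          · right; rw [hB'0, h]; simp
          · left
            have : (j : ℝ) ≤ -1 := by exact_mod_cast (by omega : j ≤ -1)
            rw [hB'0]; linarith
      have hb := term_bound B' i j hji hBi huj
      have hGeq : G (j - 1) - G j =
          (2 / (((j : ℝ) - 1) - i) +
              (3 / (B' - i)) * (Real.sqrt (B' - ((j : ℝ) - 1)) / Real.sqrt (((j : ℝ) - 1) - i)))
            - (2 / ((j : ℝ) - i) + (3 / (B' - i)) * (Real.sqrt (B' - j) / Real.sqrt ((j : ℝ) - i))) := by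
        simp only [hGdef]
        push_cast
        ring_nf
      rw [hGeq]
      exact hb
    rw [telescope_int G y m (by omega)] at hsum
    have hym : (y : ℝ) + 1 ≤ (m : ℝ) := by exact_mod_cast hm
    have hGm : 0 ≤ G m := by
      have h1 : (0 : ℝ) < (m : ℝ) - i := by linarith
      apply add_nonneg
      · positivity
      · apply mul_nonneg (div_nonneg (by norm_num) hBi.le) (by positivity)
    have hyB' : (y : ℝ) ≤ B' := by linarith
    have hGy : G y ≤ 5 / ((y : ℝ) - i) := by
      have hyi1 : (1 : ℝ) ≤ (y : ℝ) - i := by linarith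
      have hs1 : Real.sqrt (B' - y) ≤ Real.sqrt (B' - i) := Real.sqrt_le_sqrt (by linarith)
      have hs2 : Real.sqrt ((y : ℝ) - i) ≤ Real.sqrt (B' - i) := Real.sqrt_le_sqrt (by linarith)
      have hs3 : Real.sqrt ((y : ℝ) - i) ^ 2 = (y : ℝ) - i := Real.sq_sqrt (by linarith)
      have hs4 : Real.sqrt (B' - i) ^ 2 = B' - i := Real.sq_sqrt hBi.le
      have hs5 : 1 ≤ Real.sqrt ((y : ℝ) - i) := Real.le_sqrt_of_sq_le (by nlinarith)
      have hs0 : 0 ≤ Real.sqrt (B' - y) := Real.sqrt_nonneg _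
      have hskey : (3 / (B' - i)) * (Real.sqrt (B' - y) / Real.sqrt ((y : ℝ) - i))
          ≤ 3 / ((y : ℝ) - i) := by
        rw [div_mul_div_comm, div_le_div_iff₀
          (by nlinarith : 0 < (B' - i) * Real.sqrt ((y : ℝ) - i)) (by linarith)]
        nlinarith [mul_le_mul hs1 hs2 (Real.sqrt_nonneg _) (Real.sqrt_nonneg _)]
      have hgy : G y = 2 / ((y : ℝ) - i)
          + (3 / (B' - i)) * (Real.sqrt (B' - y) / Real.sqrt ((y : ℝ) - i)) := rfl
      have h25 : 2 / ((y : ℝ) - i) + 3 / ((y : ℝ) - i) = 5 / ((y : ℝ) - i) := by ring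
      rw [hgy]
      linarith
    clear_value G
    have hfinal : 5 / ((y : ℝ) - i) ≤ 10 / ((y : ℝ) - i + 1) := by
      rw [div_le_div_iff₀ (by linarith) (by linarith)]
      nlinarith
    calc ∑ j ∈ Finset.Icc (y + 1) m,
        (1 / ((j : ℝ) - i) ^ 2) *
          (Real.sqrt (B' - i) / Real.sqrt (B' - j) + Real.sqrt (B' - j) / Real.sqrt (B' - i))
        ≤ G y - G m := hsum
      _ ≤ 5 / ((y : ℝ) - i) := by
          have h := sub_le_self (G y) hGm
          linarith [h, hGy]
      _ ≤ 10 / ((y : ℝ) - i + 1) := hfinal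
  · rw [Finset.Icc_eq_empty (by omega)]
    simp only [Finset.sum_empty]
    apply div_nonneg (by norm_num)
    linarith
end

section
/- Suppose (f_n) is a sequence of entire functions with f_n(z) = e^{-z} ∑_{k≥0} f_{nk} z^k / k!, and there exist constants f_∞, γ and α ∈ (0, 1/4) such that max_{|z|=n} |f_n(z)| = O(e^{γ√n}) and max_{|z/n - 1| ≤ n^{-α}} |f_n(z) - f_∞|·e^{-γ|z-n|/√n} = o(1) as n → ∞. Then f_{nn} → f_∞. -/
open Complex Filter FormalMultilinearSeries NNReal


lemma depois_hasBall (b : ℕ → ℂ) (g : ℂ → ℂ)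
    (h : ∀ z : ℂ, HasSum (fun k : ℕ => b k * z ^ k / (Nat.factorial k : ℂ)) (g z)) :
    ∀ r : ℝ≥0, 0 < r →
      HasFPowerSeriesOnBall g (ofScalars ℂ (fun k => b k / (Nat.factorial k : ℂ))) 0 r := by
  set c : ℕ → ℂ := fun k => b k / (Nat.factorial k : ℂ) with hc
  set p : FormalMultilinearSeries ℂ ℂ ℂ := ofScalars ℂ c with hp
  have hnorm : ∀ k, ‖p k‖ = ‖c k‖ := fun k => ofScalars_norm ℂ c k
  have hrad : ∀ r : ℝ≥0, (r : ENNReal) ≤ p.radius := by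
    intro r
    have hsum := (h (r : ℂ)).summable
    have hterm : Tendsto (fun k : ℕ => ‖b k * (r : ℂ) ^ k / (Nat.factorial k : ℂ)‖)
        atTop (nhds 0) := by
      simpa using hsum.tendsto_atTop_zero.norm
    obtain ⟨C, hC⟩ := hterm.bddAbove_range
    apply p.le_radius_of_bound C
    intro k
    have : ‖p k‖ * (r : ℝ) ^ k = ‖b k * (r : ℂ) ^ k / (Nat.factorial k : ℂ)‖ := by
      rw [hnorm]
      simp [hc, norm_div, norm_mul, norm_pow, mul_comm, mul_div_assoc, mul_comm]
      ring
    rw [this]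
    exact hC ⟨k, rfl⟩
  intro r hr
  refine ⟨hrad r, by exact_mod_cast hr, ?_⟩
  intro y _
  have happ : ∀ k : ℕ, (p k fun _ => y) = b k * y ^ k / (Nat.factorial k : ℂ) := by
    intro k
    rw [hp, ofScalars_apply_eq]
    simp [hc, smul_eq_mul]
    ring
  simpa [happ, zero_add] using h y

lemma depois_entire (b : ℕ → ℂ) (g : ℂ → ℂ)
    (h : ∀ z : ℂ, HasSum (fun k : ℕ => b k * z ^ k / (Nat.factorial k : ℂ)) (g z)) :
    Differentiable ℂ g := by
  intro z
  rcases exists_nat_gt (‖z‖) with ⟨m, hm⟩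
  have hball' := depois_hasBall b g h (m + 1) (by positivity)
  refine (hball'.analyticAt_of_mem ?_).differentiableAt
  rw [EMetric.mem_ball, edist_zero_right]
  have h1 : ‖z‖₊ < ((m : ℝ≥0) + 1) := by
    rw [← NNReal.coe_lt_coe]
    push_cast
    simpa using hm.trans (lt_add_one (m : ℝ))
  exact_mod_cast h1

lemma depois_coeff (b : ℕ → ℂ) (g : ℂ → ℂ)
    (h : ∀ z : ℂ, HasSum (fun k : ℕ => b k * z ^ k / (Nat.factorial k : ℂ)) (g z))
    (R : ℝ≥0) (hR : 0 < R) (n : ℕ) :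
    (b n / (Nat.factorial n : ℂ)) =
      (2 * Real.pi * I : ℂ)⁻¹ • ∮ z in C(0, (R : ℝ)), z⁻¹ ^ n • z⁻¹ • g z := by
  set p : FormalMultilinearSeries ℂ ℂ ℂ := ofScalars ℂ (fun k => b k / (Nat.factorial k : ℂ))
    with hp
  have hdiff : Differentiable ℂ g := depois_entire b g h
  have hcauchy : HasFPowerSeriesOnBall g (cauchyPowerSeries g 0 R) 0 R :=
    (hdiff.differentiableOn).hasFPowerSeriesOnBall hR
  have huniq : p = cauchyPowerSeries g 0 R :=
    (depois_hasBall b g h R hR).hasFPowerSeriesAt.eq_formalMultilinearSeries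
      hcauchy.hasFPowerSeriesAt
  have h1 : (p n fun _ => (1 : ℂ)) = b n / (Nat.factorial n : ℂ) := by
    rw [hp, ofScalars_apply_eq]
    simp
  rw [← h1, huniq, cauchyPowerSeries_apply]
  simp [sub_zero, one_div]

lemma depois_sub_coeff (b : ℕ → ℂ) (g : ℂ → ℂ) (w : ℂ)
    (h : ∀ z : ℂ, HasSum (fun k : ℕ => b k * z ^ k / (Nat.factorial k : ℂ)) (g z))
    (R : ℝ≥0) (hR : 0 < R) (n : ℕ) :
    ((b n - w) / (Nat.factorial n : ℂ)) =
      (2 * Real.pi * I : ℂ)⁻¹ • ∮ z in C(0, (R : ℝ)),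
        z⁻¹ ^ n • z⁻¹ • (g z - w * Complex.exp z) := by
  apply depois_coeff (fun k => b k - w) (fun z => g z - w * Complex.exp z) ?_ R hR n
  intro z
  have hexp : HasSum (fun k : ℕ => w * z ^ k / (Nat.factorial k : ℂ)) (w * Complex.exp z) := by
    have := (NormedSpace.expSeries_div_hasSum_exp z).mul_left w
    rw [← Complex.exp_eq_exp_ℂ] at this
    simpa [mul_div_assoc] using this
  have := (h z).sub hexp
  apply this.congr_fun
  intro k
  ring


-- Stirling bound
lemma depois_stirling : ∃ Cs : ℝ, 0 < Cs ∧ ∀ n : ℕ, 1 ≤ n →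
    (Nat.factorial n : ℝ) ≤ Cs * Real.sqrt n * ((n : ℝ) / Real.exp 1) ^ n := by
  obtain ⟨B, hB⟩ := Stirling.tendsto_stirlingSeq_sqrt_pi.bddAbove_range
  have hB1 : Stirling.stirlingSeq 1 ≤ B := hB ⟨1, rfl⟩
  have hB1' : 0 < Stirling.stirlingSeq 1 := by
    rw [Stirling.stirlingSeq_one]; positivity
  have hBpos : 0 < B := lt_of_lt_of_le hB1' hB1
  refine ⟨B * Real.sqrt 2, mul_pos hBpos (Real.sqrt_pos.mpr two_pos), fun n hn => ?_⟩
  have hn0 : (0:ℝ) < (n:ℝ) := by exact_mod_cast hn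
  have hd : 0 < Real.sqrt (2 * n) * ((n : ℝ) / Real.exp 1) ^ n := by positivity
  have := hB ⟨n, rfl⟩
  have h1 : (Nat.factorial n : ℝ) ≤ B * (Real.sqrt (2 * n) * ((n : ℝ) / Real.exp 1) ^ n) := by
    have h2 : Stirling.stirlingSeq n ≤ B := this
    rw [Stirling.stirlingSeq, div_le_iff₀ hd] at h2
    exact h2
  calc (Nat.factorial n : ℝ) ≤ B * (Real.sqrt (2 * n) * ((n : ℝ) / Real.exp 1) ^ n) := h1
    _ = B * Real.sqrt 2 * Real.sqrt n * ((n : ℝ) / Real.exp 1) ^ n := by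
        rw [Real.sqrt_mul (by norm_num : (0:ℝ) ≤ 2)]; ring

-- Gaussian integral bound
lemma depois_gauss {c : ℝ} (hc : 0 < c) :
    ∫ θ in (-Real.pi)..Real.pi, Real.exp (-(c * θ ^ 2)) ≤ Real.sqrt (Real.pi / c) := by
  rw [intervalIntegral.integral_of_le (by linarith [Real.pi_pos])]
  have h1 : ∫ θ in Set.Ioc (-Real.pi) Real.pi, Real.exp (-(c * θ ^ 2)) ≤
      ∫ θ : ℝ, Real.exp (-(c * θ ^ 2)) := by
    apply MeasureTheory.setIntegral_le_integral
    · simpa [neg_mul] using integrable_exp_neg_mul_sq hc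
    · filter_upwards with x using (Real.exp_pos _).le
  have h2 : ∫ θ : ℝ, Real.exp (-(c * θ ^ 2)) = Real.sqrt (Real.pi / c) := by
    simpa [neg_mul] using integral_gaussian c
  rw [← h2]; exact h1

-- tail tendsto
lemma depois_tail {γ c β : ℝ} (hc : 0 < c) (hβ : 1/2 < β) :
    Tendsto (fun n : ℕ => Real.sqrt n * Real.exp (γ * Real.sqrt n) *
      Real.exp (-(c * (n:ℝ) ^ β))) atTop (nhds 0) := by
  have hβ0 : 0 < β := by linarith
  have hE : Tendsto (fun x : ℝ => (1/2) * (Real.log x / x ^ β) + γ * x ^ ((1:ℝ)/2 - β) - c)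
      atTop (nhds (-c)) := by
    have h1 : Tendsto (fun x : ℝ => Real.log x / x ^ β) atTop (nhds 0) :=
      (isLittleO_log_rpow_atTop hβ0).tendsto_div_nhds_zero
    have h2 : Tendsto (fun x : ℝ => x ^ ((1:ℝ)/2 - β)) atTop (nhds 0) := by
      have := tendsto_rpow_neg_atTop (by linarith : 0 < β - 1/2)
      simpa [neg_sub] using this
    have := ((h1.const_mul (1/2)).add (h2.const_mul γ)).sub_const c
    simpa using this
  have hpow : Tendsto (fun x : ℝ => x ^ β) atTop atTop := tendsto_rpow_atTop hβ0
  have hEbot : Tendsto (fun x : ℝ => x ^ β * ((1/2) * (Real.log x / x ^ β) +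
      γ * x ^ ((1:ℝ)/2 - β) - c)) atTop atBot :=
    hpow.atTop_mul_neg (by linarith) hE
  have hexp : Tendsto (fun x : ℝ => Real.exp (x ^ β * ((1/2) * (Real.log x / x ^ β) +
      γ * x ^ ((1:ℝ)/2 - β) - c))) atTop (nhds 0) :=
    Real.tendsto_exp_atBot.comp hEbot
  have hnat : Tendsto (fun n : ℕ => Real.exp (((n:ℝ)) ^ β * ((1/2) * (Real.log n / (n:ℝ) ^ β) +
      γ * (n:ℝ) ^ ((1:ℝ)/2 - β) - c))) atTop (nhds 0) :=
    hexp.comp tendsto_natCast_atTop_atTop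
  apply hnat.congr'
  filter_upwards [eventually_ge_atTop 1] with n hn
  have hn0 : (0:ℝ) < (n:ℝ) := by exact_mod_cast hn
  have hxb : (0:ℝ) < (n:ℝ) ^ β := Real.rpow_pos_of_pos hn0 β
  have hsqrt : Real.sqrt n = Real.exp ((1/2) * Real.log n) := by
    rw [Real.sqrt_eq_rpow, Real.rpow_def_of_pos hn0, mul_comm]
  have hhalf : γ * Real.sqrt n = γ * (n:ℝ) ^ ((1:ℝ)/2) := by
    rw [Real.sqrt_eq_rpow]
  rw [hhalf, hsqrt, ← Real.exp_add, ← Real.exp_add]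
  congr 1
  have hrw : (n:ℝ) ^ β * ((1/2) * (Real.log n / (n:ℝ) ^ β)) = (1/2) * Real.log n := by
    field_simp
  have hrw2 : (n:ℝ) ^ β * (γ * (n:ℝ) ^ ((1:ℝ)/2 - β)) = γ * (n:ℝ) ^ ((1:ℝ)/2) := by
    rw [mul_comm ((n:ℝ)^β), mul_assoc, ← Real.rpow_add hn0]
    ring_nf
  rw [mul_sub, mul_add, hrw, hrw2]
  ring

-- |e^{iθ} - 1| ≤ |θ|
lemma depois_exp_circle (θ : ℝ) : ‖Complex.exp (θ * I) - 1‖ ≤ |θ| := by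
  have h1 : ‖Complex.exp (θ * I) - 1‖ ^ 2 = 2 - 2 * Real.cos θ := by
    rw [Complex.sq_norm, Complex.normSq_apply]
    simp [Complex.exp_ofReal_mul_I_re, Complex.exp_ofReal_mul_I_im]
    nlinarith [Real.sin_sq_add_cos_sq θ]
  have h2 : 2 - 2 * Real.cos θ ≤ θ ^ 2 := by
    nlinarith [Real.one_sub_sq_div_two_le_cos (x := θ)]
  have h3 : ‖Complex.exp (θ * I) - 1‖ ^ 2 ≤ |θ| ^ 2 := by
    rw [h1, _root_.sq_abs]; exact h2
  have h4 := Real.sqrt_le_sqrt h3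
  rwa [Real.sqrt_sq (norm_nonneg _), Real.sqrt_sq (abs_nonneg θ)] at h4


lemma depois_circle_bound (G : ℂ → ℂ) (n : ℕ) (hn : 1 ≤ n) :
    ‖∮ z in C(0, (n:ℝ)), z⁻¹ ^ n • z⁻¹ • G z‖ ≤
      (((n:ℝ) ^ n)⁻¹) * ∫ θ in (-Real.pi)..Real.pi,
        ‖G (circleMap 0 (n:ℝ) θ)‖ := by
  have hn0 : (0:ℝ) < (n:ℝ) := by exact_mod_cast hn
  set F : ℝ → ℂ := fun θ => deriv (circleMap 0 (n:ℝ)) θ •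
    (circleMap 0 (n:ℝ) θ)⁻¹ ^ n • (circleMap 0 (n:ℝ) θ)⁻¹ • G (circleMap 0 (n:ℝ) θ) with hF
  have hper : Function.Periodic F (2 * Real.pi) := by
    intro θ
    simp only [hF, deriv_circleMap, periodic_circleMap 0 (n:ℝ) θ]
  have hshift : (∮ z in C(0, (n:ℝ)), z⁻¹ ^ n • z⁻¹ • G z) =
      ∫ θ in (-Real.pi)..Real.pi, F θ := by
    rw [circleIntegral]
    have h0 : (0:ℝ) + 2 * Real.pi = 2 * Real.pi := by ring
    have h1 : -Real.pi + 2 * Real.pi = Real.pi := by ring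
    have := hper.intervalIntegral_add_eq 0 (-Real.pi)
    rw [h0, h1] at this
    exact this
  rw [hshift]
  have hbound : ∀ θ : ℝ, ‖F θ‖ = ((n:ℝ) ^ n)⁻¹ * ‖G (circleMap 0 (n:ℝ) θ)‖ := by
    intro θ
    simp only [hF, deriv_circleMap, norm_smul, norm_mul, Complex.norm_I,
      norm_pow, norm_inv, norm_circleMap_zero, abs_of_pos hn0]
    field_simp
    rw [one_div, inv_pow, mul_right_comm, inv_mul_cancel₀ (pow_ne_zero _ hn0.ne'), one_mul]
  calc ‖∫ θ in (-Real.pi)..Real.pi, F θ‖ ≤ ∫ θ in (-Real.pi)..Real.pi, ‖F θ‖ :=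
        intervalIntegral.norm_integral_le_integral_norm (by linarith [Real.pi_pos])
    _ = ∫ θ in (-Real.pi)..Real.pi, ((n:ℝ) ^ n)⁻¹ * ‖G (circleMap 0 (n:ℝ) θ)‖ := by
        apply intervalIntegral.integral_congr
        intro θ _
        exact hbound θ
    _ = _ := intervalIntegral.integral_const_mul _ _

set_option maxHeartbeats 1000000 in
theorem depoissonization
    (f : ℕ → ℂ → ℂ) (a : ℕ → ℕ → ℂ)
    (hseries : ∀ n : ℕ, ∀ z : ℂ,
      HasSum (fun k : ℕ => a n k * z ^ k / (Nat.factorial k : ℂ)) (Complex.exp z * f n z))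
    (finf : ℂ) (γ : ℝ) (α : ℝ) (hα : α ∈ Set.Ioo (0 : ℝ) (1 / 4))
    (hmax : ∃ C : ℝ, ∀ n : ℕ, 1 ≤ n → ∀ z : ℂ, ‖z‖ = n →
      ‖f n z‖ ≤ C * Real.exp (γ * Real.sqrt n))
    (hloc : ∀ ε : ℝ, 0 < ε → ∃ N : ℕ, ∀ n : ℕ, N ≤ n → ∀ z : ℂ,
      ‖z / n - 1‖ ≤ (n : ℝ) ^ (-α) →
      ‖f n z - finf‖ * Real.exp (-γ * ‖z - n‖ / Real.sqrt n) ≤ ε) :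
    Tendsto (fun n : ℕ => a n n) atTop (nhds finf) := by
  obtain ⟨hα0, hα4⟩ := hα
  obtain ⟨C, hC⟩ := hmax
  obtain ⟨Cs, hCs0, hCs⟩ := depois_stirling
  have hπ := Real.pi_pos
  set κ : ℝ := Cs * Real.exp (γ^2 * Real.pi^2 / 4) * Real.sqrt (Real.pi^3) / (2*Real.pi) with hκ
  have hκ0 : 0 ≤ κ := by positivity
  set H : ℕ → ℝ := fun n => Cs * Real.sqrt n *
      (C * Real.exp (γ * Real.sqrt n) + ‖finf‖) *
      Real.exp (-(2 * ((n:ℝ) * ((n:ℝ) ^ (-α))^2)) / Real.pi^2) with hH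
  -- main estimate
  have main_est : ∀ ε : ℝ, 0 < ε → ∃ N : ℕ, ∀ n : ℕ, N ≤ n → 1 ≤ n →
      ‖a n n - finf‖ ≤ ε * κ + H n := by
    intro ε hε
    obtain ⟨N, hN⟩ := hloc ε hε
    refine ⟨N, fun n hnN hn1 => ?_⟩
    have hn0 : (0:ℝ) < (n:ℝ) := by exact_mod_cast hn1
    have hR : (0:ℝ≥0) < (n:ℝ≥0) := by exact_mod_cast hn1
    have hfact : ((Nat.factorial n : ℂ)) ≠ 0 := by
      exact_mod_cast Nat.cast_ne_zero.mpr (Nat.factorial_ne_zero n)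
    set G : ℂ → ℂ := fun z => Complex.exp z * f n z - finf * Complex.exp z with hG
    have hGdiff : Differentiable ℂ G := by
      have h1 : Differentiable ℂ (fun z => Complex.exp z * f n z) :=
        depois_entire (a n) _ (hseries n)
      exact h1.sub (Complex.differentiable_exp.const_mul finf)
    have hGcont : Continuous G := hGdiff.continuous
    -- step 1: identity
    have key := depois_sub_coeff (a n) (fun z => Complex.exp z * f n z) finf
      (hseries n) (n : ℝ≥0) hR n
    have hcast : (((n:ℝ≥0)) : ℝ) = (n:ℝ) := rfl
    rw [hcast] at key
    have key2 : a n n - finf = (Nat.factorial n : ℂ) *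
        ((2 * Real.pi * I : ℂ)⁻¹ • ∮ z in C(0, (n:ℝ)), z⁻¹ ^ n • z⁻¹ • G z) := by
      rw [← key]; field_simp
    have habs : ‖a n n - finf‖ = (Nat.factorial n : ℝ) * ((2 * Real.pi)⁻¹ *
        ‖∮ z in C(0, (n:ℝ)), z⁻¹ ^ n • z⁻¹ • G z‖) := by
      rw [key2, norm_mul]
      congr 1
      · simp
      · rw [smul_eq_mul, norm_mul, norm_inv]
        congr 1
        simp [Complex.norm_real, abs_of_pos Real.pi_pos]
    -- step 2: circle bound
    have hcb := depois_circle_bound G n hn1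
    -- step 3: pointwise bound
    set P : ℝ → ℝ := fun θ => (Nat.factorial n : ℝ) * (((n:ℝ) ^ n)⁻¹ *
        ‖G (circleMap 0 (n:ℝ) θ)‖) with hP
    have hs0 : 0 < Real.sqrt n := Real.sqrt_pos.mpr hn0
    have hM0 : 0 ≤ C * Real.exp (γ * Real.sqrt n) + ‖finf‖ := by
      have h1 : (0:ℝ) ≤ C * Real.exp (γ * Real.sqrt n) :=
        le_trans (norm_nonneg (f n (n:ℂ)))
          (hC n hn1 (n:ℂ) (by simp [abs_of_pos hn0]))
      exact add_nonneg h1 (norm_nonneg _)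
    have hHnn : 0 ≤ H n := by
      rw [hH]
      have := Real.exp_pos (-(2 * ((n:ℝ) * ((n:ℝ) ^ (-α))^2)) / Real.pi^2)
      positivity
    have hPbound : ∀ θ ∈ Set.Icc (-Real.pi) Real.pi,
        P θ ≤ ε * (Cs * Real.exp (γ^2 * Real.pi^2 / 4)) *
          (Real.sqrt n * Real.exp (-((n:ℝ)/Real.pi^2 * θ^2))) + H n := by
      intro θ hθ
      obtain ⟨hθ1, hθ2⟩ := hθ
      have hθabs : |θ| ≤ Real.pi := abs_le.mpr ⟨hθ1, hθ2⟩
      set z : ℂ := circleMap 0 (n:ℝ) θ with hz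
      have hzabs : ‖z‖ = (n:ℝ) := by rw [hz, norm_circleMap_zero, abs_of_pos hn0]
      have hzre : z.re = (n:ℝ) * Real.cos θ := by simp [hz, circleMap]
      have hGval : ‖G z‖ =
          Real.exp ((n:ℝ) * Real.cos θ) * ‖f n z - finf‖ := by
        have hGz : G z = Complex.exp z * (f n z - finf) := by rw [hG]; ring
        rw [hGz, norm_mul, Complex.norm_exp, hzre]
      have hA0 : 0 ≤ ‖f n z - finf‖ := norm_nonneg _
      have hker : (Nat.factorial n : ℝ) * (((n:ℝ)^n)⁻¹ * Real.exp ((n:ℝ)*Real.cos θ)) ≤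
          Cs * Real.sqrt n * Real.exp ((n:ℝ)*Real.cos θ - n) := by
        have hdiv : ((n:ℝ)/Real.exp 1)^n = (n:ℝ)^n * Real.exp (-(n:ℝ)) := by
          rw [div_pow, Real.exp_one_pow, Real.exp_neg, div_eq_mul_inv]
        have h1 : (Nat.factorial n : ℝ) ≤ Cs * Real.sqrt n * ((n:ℝ)^n * Real.exp (-(n:ℝ))) := by
          have h2 := hCs n hn1
          rwa [hdiv] at h2
        have hX : (0:ℝ) ≤ ((n:ℝ)^n)⁻¹ * Real.exp ((n:ℝ)*Real.cos θ) := by positivity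
        calc (Nat.factorial n : ℝ) * (((n:ℝ)^n)⁻¹ * Real.exp ((n:ℝ)*Real.cos θ))
            ≤ Cs * Real.sqrt n * ((n:ℝ)^n * Real.exp (-(n:ℝ))) *
              (((n:ℝ)^n)⁻¹ * Real.exp ((n:ℝ)*Real.cos θ)) :=
              mul_le_mul_of_nonneg_right h1 hX
          _ = Cs * Real.sqrt n * Real.exp ((n:ℝ)*Real.cos θ - n) := by
              rw [show Real.exp ((n:ℝ)*Real.cos θ - (n:ℝ)) =
                Real.exp ((n:ℝ)*Real.cos θ) * Real.exp (-(n:ℝ)) by rw [← Real.exp_add]; ring_nf]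
              have hnn : ((n:ℝ)^n) ≠ 0 := by positivity
              field_simp
      have hcos : (n:ℝ)*Real.cos θ - n ≤ -(2/Real.pi^2) * ((n:ℝ) * θ^2) := by
        have hc2 := Real.cos_le_one_sub_mul_cos_sq hθabs
        have hπ2 : 0 < Real.pi^2 := by positivity
        have h3 : (n:ℝ) * Real.cos θ ≤ (n:ℝ) * (1 - 2/Real.pi^2 * θ^2) :=
          mul_le_mul_of_nonneg_left hc2 hn0.le
        nlinarith
      have hP' : P θ ≤ Cs * Real.sqrt n * Real.exp (-(2/Real.pi^2) * ((n:ℝ)*θ^2)) *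
          ‖f n z - finf‖ := by
        calc P θ = ((Nat.factorial n : ℝ) * (((n:ℝ)^n)⁻¹ * Real.exp ((n:ℝ)*Real.cos θ))) *
              ‖f n z - finf‖ := by
              rw [hP]
              simp only []
              rw [hGval]
              ring
          _ ≤ (Cs * Real.sqrt n * Real.exp ((n:ℝ)*Real.cos θ - n)) *
              ‖f n z - finf‖ := mul_le_mul_of_nonneg_right hker hA0
          _ ≤ _ := by
              apply mul_le_mul_of_nonneg_right _ hA0
              exact mul_le_mul_of_nonneg_left (Real.exp_le_exp.mpr hcos) (by positivity)
      by_cases hin : |θ| ≤ (n:ℝ)^(-α)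
      · -- inner region
        have hzdiv : z / n - 1 = Complex.exp (θ * I) - 1 := by
          rw [hz]
          simp only [circleMap, Complex.ofReal_natCast, zero_add]
          have hnc : ((n:ℝ):ℂ) ≠ 0 := by exact_mod_cast hn0.ne'
          field_simp
          rw [mul_div_cancel_left₀ _ (by exact_mod_cast hn0.ne' : (n:ℂ) ≠ 0)]
        have hlocz := hN n hnN z (by
          rw [hzdiv]
          exact (depois_exp_circle θ).trans hin)
        have hzsub : ‖z - n‖ ≤ (n:ℝ) * |θ| := by
          have hzs : z - (n:ℂ) = (n:ℂ) * (Complex.exp (θ*I) - 1) := by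
            rw [hz]
            simp only [circleMap, Complex.ofReal_natCast, zero_add]
            ring
          rw [hzs, norm_mul]
          have : ‖((n:ℕ):ℂ)‖ = (n:ℝ) := by
            simp
          rw [this]
          exact mul_le_mul_of_nonneg_left (depois_exp_circle θ) hn0.le
        have hf1 : ‖f n z - finf‖ ≤
            ε * Real.exp (γ * ‖z - n‖ / Real.sqrt n) := by
          have hE : (0:ℝ) < Real.exp (-γ * ‖z - n‖ / Real.sqrt n) :=
            Real.exp_pos _
          have h5 : ‖f n z - finf‖ ≤
              ε / Real.exp (-γ * ‖z - n‖ / Real.sqrt n) :=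
            (le_div_iff₀ hE).mpr hlocz
          have h6 : ε / Real.exp (-γ * ‖z - n‖ / Real.sqrt n) =
              ε * Real.exp (γ * ‖z - n‖ / Real.sqrt n) := by
            rw [show -γ * ‖z - n‖ / Real.sqrt n =
              -(γ * ‖z - n‖ / Real.sqrt n) by ring, Real.exp_neg, div_inv_eq_mul]
          rwa [h6] at h5
        have hf2 : γ * ‖z - n‖ / Real.sqrt n ≤ |γ| * Real.sqrt n * |θ| := by
          have hd0 : 0 ≤ ‖z - n‖ := norm_nonneg _
          have hsq : Real.sqrt n * Real.sqrt n = (n:ℝ) := Real.mul_self_sqrt hn0.le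
          rw [div_le_iff₀ hs0]
          calc γ * ‖z - n‖ ≤ |γ| * ‖z - n‖ :=
                mul_le_mul_of_nonneg_right (le_abs_self γ) hd0
            _ ≤ |γ| * ((n:ℝ) * |θ|) :=
                mul_le_mul_of_nonneg_left hzsub (abs_nonneg γ)
            _ = |γ| * Real.sqrt n * |θ| * Real.sqrt n := by linear_combination (|γ| * |θ|) * hsq.symm
        have hamgm : |γ| * Real.sqrt n * |θ| ≤ (n:ℝ)/Real.pi^2 * θ^2 + γ^2*Real.pi^2/4 := by
          have hπ2 : (0:ℝ) < Real.pi^2 := by positivity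
          have hs2 : (Real.sqrt n * |θ|)^2 = (n:ℝ) * θ^2 := by
            rw [mul_pow, Real.sq_sqrt hn0.le, _root_.sq_abs]
          have h9 : |γ| * (Real.sqrt n * |θ|) * Real.pi^2 ≤
              (Real.sqrt n * |θ|)^2 + γ^2*Real.pi^4/4 := by
            rw [show γ^2 = |γ|^2 from (_root_.sq_abs γ).symm]
            nlinarith [sq_nonneg (Real.sqrt n * |θ| - |γ| * Real.pi^2/2)]
          have h10 : (n:ℝ)/Real.pi^2*θ^2 + γ^2*Real.pi^2/4 =
              ((Real.sqrt n * |θ|)^2 + γ^2*Real.pi^4/4)/Real.pi^2 := by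
            rw [hs2]; field_simp
          rw [h10, le_div_iff₀ hπ2]
          nlinarith [h9]
        have hfb : ‖f n z - finf‖ ≤
            ε * Real.exp ((n:ℝ)/Real.pi^2 * θ^2 + γ^2*Real.pi^2/4) :=
          hf1.trans (mul_le_mul_of_nonneg_left
            (Real.exp_le_exp.mpr (hf2.trans hamgm)) hε.le)
        have hprod : Real.exp (-(2/Real.pi^2) * ((n:ℝ)*θ^2)) *
            Real.exp ((n:ℝ)/Real.pi^2 * θ^2 + γ^2*Real.pi^2/4) =
            Real.exp (γ^2*Real.pi^2/4) * Real.exp (-((n:ℝ)/Real.pi^2 * θ^2)) := by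
          rw [← Real.exp_add, ← Real.exp_add]
          congr 1
          field_simp
          ring
        calc P θ ≤ Cs * Real.sqrt n * Real.exp (-(2/Real.pi^2) * ((n:ℝ)*θ^2)) *
              ‖f n z - finf‖ := hP'
          _ ≤ Cs * Real.sqrt n * Real.exp (-(2/Real.pi^2) * ((n:ℝ)*θ^2)) *
              (ε * Real.exp ((n:ℝ)/Real.pi^2 * θ^2 + γ^2*Real.pi^2/4)) :=
              mul_le_mul_of_nonneg_left hfb (by positivity)
          _ = ε * Cs * (Real.sqrt n * (Real.exp (-(2/Real.pi^2) * ((n:ℝ)*θ^2)) *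
              Real.exp ((n:ℝ)/Real.pi^2 * θ^2 + γ^2*Real.pi^2/4))) := by ring
          _ = ε * (Cs * Real.exp (γ^2 * Real.pi^2 / 4)) *
              (Real.sqrt n * Real.exp (-((n:ℝ)/Real.pi^2 * θ^2))) := by
              rw [hprod]; ring
          _ ≤ _ := le_add_of_nonneg_right hHnn
      · -- outer region
        push_neg at hin
        have hfM : ‖f n z - finf‖ ≤
            C * Real.exp (γ * Real.sqrt n) + ‖finf‖ := by
          calc ‖f n z - finf‖ ≤ ‖f n z‖ + ‖finf‖ := by
                have := norm_sub_le (f n z) finf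
                simpa using this
            _ ≤ _ := add_le_add_left (hC n hn1 z hzabs) _
        have hexp2 : Real.exp (-(2/Real.pi^2) * ((n:ℝ)*θ^2)) ≤
            Real.exp (-(2 * ((n:ℝ) * ((n:ℝ) ^ (-α))^2)) / Real.pi^2) := by
          apply Real.exp_le_exp.mpr
          have h0 : 0 ≤ (n:ℝ)^(-α) := Real.rpow_nonneg hn0.le _
          have hθ2 : ((n:ℝ)^(-α))^2 ≤ θ^2 := by nlinarith [_root_.sq_abs θ]
          have hπ2 : 0 < Real.pi^2 := by positivity
          rw [show (-(2 * ((n:ℝ) * ((n:ℝ) ^ (-α))^2)) / Real.pi^2) =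
            -(2/Real.pi^2) * ((n:ℝ) * ((n:ℝ)^(-α))^2) by field_simp]
          have h7 : (n:ℝ) * ((n:ℝ)^(-α))^2 ≤ (n:ℝ) * θ^2 :=
            mul_le_mul_of_nonneg_left hθ2 hn0.le
          exact mul_le_mul_of_nonpos_left h7 (neg_nonpos.mpr (by positivity))
        calc P θ ≤ Cs * Real.sqrt n * Real.exp (-(2/Real.pi^2) * ((n:ℝ)*θ^2)) *
              ‖f n z - finf‖ := hP'
          _ ≤ Cs * Real.sqrt n * Real.exp (-(2/Real.pi^2) * ((n:ℝ)*θ^2)) *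
              (C * Real.exp (γ * Real.sqrt n) + ‖finf‖) :=
              mul_le_mul_of_nonneg_left hfM (by positivity)
          _ ≤ Cs * Real.sqrt n *
              Real.exp (-(2 * ((n:ℝ) * ((n:ℝ) ^ (-α))^2)) / Real.pi^2) *
              (C * Real.exp (γ * Real.sqrt n) + ‖finf‖) :=
              mul_le_mul_of_nonneg_right
                (mul_le_mul_of_nonneg_left hexp2 (by positivity)) hM0
          _ = H n := by rw [hH]; ring
          _ ≤ _ := by
              have : 0 ≤ ε * (Cs * Real.exp (γ^2 * Real.pi^2 / 4)) *
                  (Real.sqrt n * Real.exp (-((n:ℝ)/Real.pi^2 * θ^2))) := by positivity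
              linarith
    -- step 4: integrate
    have hPcont : Continuous P := by
      apply continuous_const.mul
      apply continuous_const.mul
      exact (continuous_norm.comp (hGcont.comp (continuous_circleMap 0 (n:ℝ))))
    have hQcont : Continuous (fun θ : ℝ => ε * (Cs * Real.exp (γ^2 * Real.pi^2 / 4)) *
        (Real.sqrt n * Real.exp (-((n:ℝ)/Real.pi^2 * θ^2))) + H n) := by
      fun_prop
    have hint : ∫ θ in (-Real.pi)..Real.pi, P θ ≤
        ∫ θ in (-Real.pi)..Real.pi, (ε * (Cs * Real.exp (γ^2 * Real.pi^2 / 4)) *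
          (Real.sqrt n * Real.exp (-((n:ℝ)/Real.pi^2 * θ^2))) + H n) := by
      apply intervalIntegral.integral_mono_on (by linarith)
        (hPcont.intervalIntegrable _ _) (hQcont.intervalIntegrable _ _) hPbound
    have hgauss : ∫ θ in (-Real.pi)..Real.pi, Real.exp (-((n:ℝ)/Real.pi^2 * θ^2)) ≤
        Real.sqrt (Real.pi^3 / n) := by
      have h1 := depois_gauss (c := (n:ℝ)/Real.pi^2) (by positivity)
      have h2 : Real.pi / ((n:ℝ)/Real.pi^2) = Real.pi^3 / n := by
        field_simp
      rwa [h2] at h1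
    have hsqrtmul : Real.sqrt n * Real.sqrt (Real.pi^3 / n) = Real.sqrt (Real.pi^3) := by
      rw [← Real.sqrt_mul hn0.le, mul_div_cancel₀ _ hn0.ne']
    have hintval : ∫ θ in (-Real.pi)..Real.pi, (ε * (Cs * Real.exp (γ^2 * Real.pi^2 / 4)) *
          (Real.sqrt n * Real.exp (-((n:ℝ)/Real.pi^2 * θ^2))) + H n) ≤
        ε * (Cs * Real.exp (γ^2 * Real.pi^2 / 4)) * Real.sqrt (Real.pi^3) +
          (2 * Real.pi) * H n := by
      rw [intervalIntegral.integral_add (Continuous.intervalIntegrable (by fun_prop) _ _) (intervalIntegrable_const)]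
      rw [intervalIntegral.integral_const]
      have e1 : ∫ θ in (-Real.pi)..Real.pi, (ε * (Cs * Real.exp (γ^2 * Real.pi^2 / 4)) *
          (Real.sqrt n * Real.exp (-((n:ℝ)/Real.pi^2 * θ^2)))) =
          ε * (Cs * Real.exp (γ^2 * Real.pi^2 / 4)) * Real.sqrt n *
            ∫ θ in (-Real.pi)..Real.pi, Real.exp (-((n:ℝ)/Real.pi^2 * θ^2)) := by
        rw [← intervalIntegral.integral_const_mul]
        congr 1; ext θ; ring
      rw [e1]
      have hHnn : 0 ≤ H n := by
        have hM : 0 ≤ C * Real.exp (γ * Real.sqrt n) + ‖finf‖ := by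
          have := hC n hn1 (n : ℂ) (by simp [abs_of_pos hn0])
          have h0 := norm_nonneg (f n (n : ℂ))
          have := le_trans h0 this
          positivity
        rw [hH]; positivity
      have hfirst : ε * (Cs * Real.exp (γ^2 * Real.pi^2 / 4)) * Real.sqrt n *
          ∫ θ in (-Real.pi)..Real.pi, Real.exp (-((n:ℝ)/Real.pi^2 * θ^2)) ≤
          ε * (Cs * Real.exp (γ^2 * Real.pi^2 / 4)) * Real.sqrt (Real.pi^3) := by
        calc _ ≤ ε * (Cs * Real.exp (γ^2 * Real.pi^2 / 4)) * Real.sqrt n *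
              Real.sqrt (Real.pi^3 / n) :=
            mul_le_mul_of_nonneg_left hgauss (by positivity)
          _ = _ := by rw [mul_assoc, hsqrtmul]
      have hsm : (Real.pi - -Real.pi) • H n = (2 * Real.pi) * H n := by
        rw [smul_eq_mul]; ring
      rw [hsm]
      linarith [hfirst]
    -- step 5: chain everything
    have hIg : ∫ θ in (-Real.pi)..Real.pi, P θ = (Nat.factorial n : ℝ) * (((n:ℝ) ^ n)⁻¹ *
        ∫ θ in (-Real.pi)..Real.pi, ‖G (circleMap 0 (n:ℝ) θ)‖) := by
      rw [← intervalIntegral.integral_const_mul, ← intervalIntegral.integral_const_mul]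
    have hfin : ‖a n n - finf‖ ≤ (2 * Real.pi)⁻¹ *
        (ε * (Cs * Real.exp (γ^2 * Real.pi^2 / 4)) * Real.sqrt (Real.pi^3) +
          (2 * Real.pi) * H n) := by
      rw [habs]
      calc (Nat.factorial n : ℝ) * ((2 * Real.pi)⁻¹ *
            ‖∮ z in C(0, (n:ℝ)), z⁻¹ ^ n • z⁻¹ • G z‖)
          ≤ (Nat.factorial n : ℝ) * ((2 * Real.pi)⁻¹ * ((((n:ℝ) ^ n)⁻¹) *
            ∫ θ in (-Real.pi)..Real.pi, ‖G (circleMap 0 (n:ℝ) θ)‖)) := by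
            have hfnn : (0:ℝ) ≤ (Nat.factorial n : ℝ) := by positivity
            gcongr
          _ = (2 * Real.pi)⁻¹ * ∫ θ in (-Real.pi)..Real.pi, P θ := by
            rw [hIg]; ring
          _ ≤ _ := by
            apply mul_le_mul_of_nonneg_left (le_trans hint hintval) (by positivity)
    calc ‖a n n - finf‖ ≤ _ := hfin
      _ = ε * κ + H n := by
        rw [hκ]
        field_simp
  -- tail tendsto
  have htail : Tendsto H atTop (nhds 0) := by
    have hβ : 1/2 < 1 - 2*α := by linarith
    have hc : (0:ℝ) < 2/Real.pi^2 := by positivity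
    have h1 := depois_tail (γ := γ) hc hβ
    have h2 := depois_tail (γ := 0) hc hβ
    have h3 := (h1.const_mul (Cs*C)).add (h2.const_mul (Cs*‖finf‖))
    rw [mul_zero, mul_zero, add_zero] at h3
    apply h3.congr'
    filter_upwards [eventually_ge_atTop 1] with n hn
    have hn0 : (0:ℝ) < (n:ℝ) := by exact_mod_cast hn
    have hx : ((n:ℝ) ^ (-α))^2 = (n:ℝ)^(-α*2) := by
      rw [show (((n:ℝ)^(-α))^2 : ℝ) = ((n:ℝ)^(-α))^((2:ℕ):ℝ) from (Real.rpow_natCast _ 2).symm,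
        ← Real.rpow_mul hn0.le]
      norm_num
    have hy : (n:ℝ) * (n:ℝ)^(-α*2) = (n:ℝ)^(1-2*α) := by
      rw [show (1-2*α) = 1 + (-α*2) by ring, Real.rpow_add hn0, Real.rpow_one]
    have hE : Real.exp (-(2 * ((n:ℝ) * ((n:ℝ) ^ (-α))^2)) / Real.pi^2) =
        Real.exp (-(2/Real.pi^2 * (n:ℝ)^(1-2*α))) := by
      rw [hx, hy]
      congr 1
      field_simp
    show Cs*C * (Real.sqrt n * Real.exp (γ * Real.sqrt n) *
        Real.exp (-(2/Real.pi^2 * (n:ℝ)^(1-2*α)))) +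
      Cs*‖finf‖ * (Real.sqrt n * Real.exp (0 * Real.sqrt n) *
        Real.exp (-(2/Real.pi^2 * (n:ℝ)^(1-2*α)))) = H n
    simp only [hH]
    rw [hE, zero_mul, Real.exp_zero]
    ring
  -- conclusion
  rw [Metric.tendsto_atTop]
  intro δ hδ
  obtain ⟨N₁, hN₁⟩ := main_est (δ / (2 * (κ + 1))) (by positivity)
  have hhalf : (0:ℝ) < δ / 2 := by linarith
  obtain ⟨N₂, hN₂⟩ := (Metric.tendsto_atTop.mp htail) (δ/2) hhalf
  refine ⟨max (max N₁ N₂) 1, fun n hn => ?_⟩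
  have hn1 : 1 ≤ n := le_trans (le_max_right _ _) hn
  have hnN₁ : N₁ ≤ n := le_trans (le_trans (le_max_left _ _) (le_max_left _ _)) hn
  have hnN₂ : N₂ ≤ n := le_trans (le_trans (le_max_right _ _) (le_max_left _ _)) hn
  have h1 := hN₁ n hnN₁ hn1
  have h2 := hN₂ n hnN₂
  rw [Real.dist_eq] at h2
  have hHb : H n < δ / 2 := by
    have := abs_lt.mp (by simpa using h2)
    linarith [this.2]
  have hεκ : δ / (2 * (κ + 1)) * κ ≤ δ / 2 := by
    rw [div_mul_eq_mul_div, div_le_div_iff₀ (by positivity) (by norm_num)]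
    nlinarith
  rw [dist_eq_norm]
  calc ‖a n n - finf‖ = ‖a n n - finf‖ := rfl
    _ ≤ δ / (2 * (κ + 1)) * κ + H n := h1
    _ < δ := by linarith
end
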